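/- Let H be a graph containing two internally vertex-disjoint paths P_1 and P_2 of the same parity connecting the same endpoints u and v, such that every internal vertex of P_1 and P_2 has degree 2 in H. Then every minimum-size odd cycle transversal S of H satisfies S ∩ (V(P_1) ∪ V(P_2)) ⊆ {u, v}. -/

import Mathlib

open SimpleGraph

/-- `S` is an odd cycle transversal of `G`: removing `S` leaves a bipartite graph. -/
def IsOCT {W : Type*} (G : SimpleGraph W) (S : Set W) : Prop :=
  (G.induce Sᶜ).Colorable 2


open Classical in
lemma isOCT_iff {W : Type*} (G : SimpleGraph W) (S : Set W) :
    IsOCT G S ↔ ∃ f : W → ZMod 2, ∀ a b, a ∉ S → b ∉ S → G.Adj a b → f a ≠ f b := by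
  constructor
  · rintro ⟨C⟩
    refine ⟨fun x => if h : x ∈ S then 0 else (C ⟨x, h⟩ : Fin 2), ?_⟩
    intro a b ha hb hab
    simp only [dif_neg ha, dif_neg hb]
    have := C.valid (show (G.induce Sᶜ).Adj ⟨a, ha⟩ ⟨b, hb⟩ by
      simpa using hab)
    exact fun h => this (by have h' := h; simp [ha, hb] at h'; exact h')
  · rintro ⟨f, hf⟩
    have : (G.induce Sᶜ).Coloring (ZMod 2) := by
      refine Coloring.mk (fun x => f x.1) ?_
      intro a b hab
      exact hf a.1 b.1 a.2 b.2 (by simpa using hab)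
    have h := this.colorable
    simpa [IsOCT] using h

lemma support_getElem? {V : Type} {H : SimpleGraph V} :
    ∀ {u v : V} (p : H.Walk u v) (i : ℕ), i ≤ p.length → p.support[i]? = some (p.getVert i) := by
  intro u v p
  induction p with
  | nil =>
    intro i hi
    have : i = 0 := by simpa using hi
    subst this; simp [SimpleGraph.Walk.getVert]
  | cons h q ih =>
    intro i hi
    cases i with
    | zero => simp
    | succ n =>
      simp only [Walk.support_cons, List.getElem?_cons_succ, Walk.getVert_cons_succ]
      exact ih n (by simpa using hi)

lemma getVert_injOn {V : Type} {H : SimpleGraph V} {u v : V} {p : H.Walk u v}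
    (hp : p.IsPath) {i j : ℕ} (hi : i ≤ p.length) (hj : j ≤ p.length)
    (hij : p.getVert i = p.getVert j) : i = j := by
  have h1 := support_getElem? p i hi
  have h2 := support_getElem? p j hj
  refine (List.getElem?_inj (by simp [Walk.length_support]; omega) hp.support_nodup).mp ?_
  rw [h1, h2, hij]

lemma path_adj {V : Type} [Fintype V] [DecidableEq V] {H : SimpleGraph V} [DecidableRel H.Adj]
    {u v x b : V} {p : H.Walk u v} (hp : p.IsPath) (hx : x ∈ p.support)
    (hxu : x ≠ u) (hxv : x ≠ v) (hdegx : H.degree x = 2) (hb : H.Adj x b) :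
    ∃ i, i < p.length ∧ ((x = p.getVert i ∧ b = p.getVert (i+1)) ∨
      (b = p.getVert i ∧ x = p.getVert (i+1))) := by
  obtain ⟨i0, hgv, hle⟩ := Walk.mem_support_iff_exists_getVert.mp hx
  have h0 : i0 ≠ 0 := by rintro rfl; exact hxu (by simpa using hgv.symm)
  have hlen : i0 ≠ p.length := by rintro rfl; exact hxv (by simpa using hgv.symm)
  have h1 : 1 ≤ i0 := Nat.one_le_iff_ne_zero.mpr h0
  have h2 : i0 < p.length := lt_of_le_of_ne hle hlen
  have a1 : H.Adj x (p.getVert (i0 - 1)) := by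
    have := p.adj_getVert_succ (i := i0 - 1) (by omega)
    have he : i0 - 1 + 1 = i0 := by omega
    rw [he, hgv] at this
    exact this.symm
  have a2 : H.Adj x (p.getVert (i0 + 1)) := by
    have := p.adj_getVert_succ (i := i0) h2
    rwa [hgv] at this
  have hnedup : p.getVert (i0 - 1) ≠ p.getVert (i0 + 1) := by
    intro h
    have := getVert_injOn hp (by omega) (by omega) h
    omega
  have hsub : ({p.getVert (i0 - 1), p.getVert (i0 + 1)} : Finset V) ⊆ H.neighborFinset x := by
    intro y hy
    rw [SimpleGraph.mem_neighborFinset]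
    rcases Finset.mem_insert.mp hy with rfl | hy
    · exact a1
    · rw [Finset.mem_singleton] at hy; subst hy; exact a2
  have hcard : (H.neighborFinset x).card = 2 := by
    rwa [← SimpleGraph.degree]
  have heq : H.neighborFinset x = {p.getVert (i0 - 1), p.getVert (i0 + 1)} := by
    refine (Finset.eq_of_subset_of_card_le hsub ?_).symm
    rw [hcard, Finset.card_pair hnedup]
  have hbmem : b ∈ H.neighborFinset x := by rwa [SimpleGraph.mem_neighborFinset]
  rw [heq] at hbmem
  rcases Finset.mem_insert.mp hbmem with rfl | hbmem
  · refine ⟨i0 - 1, by omega, Or.inr ⟨rfl, ?_⟩⟩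
    have he : i0 - 1 + 1 = i0 := by omega
    rw [he, hgv]
  · rw [Finset.mem_singleton] at hbmem
    subst hbmem
    exact ⟨i0, h2, Or.inl ⟨hgv.symm, rfl⟩⟩

lemma alternation {V : Type} {H : SimpleGraph V} {c : V → ZMod 2} {S : Set V}
    (hc : ∀ a b, a ∉ S → b ∉ S → H.Adj a b → c a ≠ c b) :
    ∀ {u v : V} (p : H.Walk u v), (∀ y ∈ p.support, y ∉ S) → c v = c u + p.length := by
  intro u v p
  induction p with
  | nil => simp
  | @cons a w _ h q ih =>
    intro hsup
    have ha : a ∉ S := hsup a (by simp)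
    have hw : w ∉ S := hsup w (by simp)
    have hne := hc a w ha hw h
    have hstep : ∀ x y : ZMod 2, x ≠ y → y = x + 1 := by decide
    have hq := ih (fun y hy => hsup y (by simp [hy]))
    rw [hq, hstep _ _ hne]
    push_cast [Walk.length_cons]
    ring

def pInner {V : Type} {H : SimpleGraph V} {u v : V} (P : H.Walk u v) : Set V :=
  {x | x ∈ P.support ∧ x ≠ u ∧ x ≠ v}

lemma key_step {V : Type} [Fintype V] [DecidableEq V] {H : SimpleGraph V} [DecidableRel H.Adj]
    {u v : V} {P : H.Walk u v} (hP : P.IsPath)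
    (hdegP : ∀ x ∈ P.support, x ≠ u → x ≠ v → H.degree x = 2)
    {S' : Set V} {f : V → ZMod 2} {b0 : ZMod 2} {idx : V → ℕ}
    (hidx : ∀ x ∈ P.support, P.getVert (idx x) = x ∧ idx x ≤ P.length)
    (hfP : ∀ y ∈ pInner P, f y = b0 + idx y)
    (hfu : u ∉ S' → f u = b0)
    (hfv : v ∉ S' → f v = b0 + P.length)
    {a b : V} (ha : a ∈ pInner P) (hb : b ∉ S') (hab : H.Adj a b) :
    f a ≠ f b := by
  obtain ⟨hasup, hau, hav⟩ := ha
  obtain ⟨i, hilt, hcase⟩ := path_adj hP hasup hau hav (hdegP a hasup hau hav) hab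
  have hstep : ∀ (z : ZMod 2) (n : ℕ), z + (n : ZMod 2) ≠ z + ((n + 1 : ℕ) : ZMod 2) := by
    intro z n
    push_cast
    rw [← add_assoc]
    have : ∀ w : ZMod 2, w ≠ w + 1 := by decide
    exact this _
  rcases hcase with ⟨hai, hbi⟩ | ⟨hbi, hai⟩
  · have hia : idx a = i :=
      getVert_injOn hP (hidx a hasup).2 (le_of_lt hilt) (by rw [(hidx a hasup).1, hai])
    have hbsup : b ∈ P.support :=
      Walk.mem_support_iff_exists_getVert.mpr ⟨i + 1, hbi.symm, hilt⟩
    by_cases hbv : b = v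
    · have hlen : i + 1 = P.length :=
        getVert_injOn hP (by omega) le_rfl (by rw [← hbi, hbv, Walk.getVert_length])
      rw [hfP a ⟨hasup, hau, hav⟩, hia, hbv, hfv (hbv ▸ hb), ← hlen]
      exact hstep b0 i
    · have hbu : b ≠ u := by
        rintro rfl
        have : i + 1 = 0 :=
          getVert_injOn hP (by omega) (by omega) (by rw [← hbi, Walk.getVert_zero])
        omega
      have hib : idx b = i + 1 :=
        getVert_injOn hP (hidx b hbsup).2 (by omega) (by rw [(hidx b hbsup).1, hbi])
      rw [hfP a ⟨hasup, hau, hav⟩, hfP b ⟨hbsup, hbu, hbv⟩, hia, hib]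
      exact hstep b0 i
  · have hia : idx a = i + 1 :=
      getVert_injOn hP (hidx a hasup).2 (by omega) (by rw [(hidx a hasup).1, hai])
    have hbsup : b ∈ P.support :=
      Walk.mem_support_iff_exists_getVert.mpr ⟨i, hbi.symm, by omega⟩
    by_cases hbu : b = u
    · have hi0 : i = 0 :=
        getVert_injOn hP (by omega) (by omega) (by rw [← hbi, hbu, Walk.getVert_zero])
      rw [hfP a ⟨hasup, hau, hav⟩, hia, hbu, hfu (hbu ▸ hb), hi0]
      simp
    · have hbv : b ≠ v := by
        rintro rfl
        have : i = P.length :=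
          getVert_injOn hP (by omega) le_rfl (by rw [← hbi, Walk.getVert_length])
        omega
      have hib : idx b = i :=
        getVert_injOn hP (hidx b hbsup).2 (by omega) (by rw [(hidx b hbsup).1, hbi])
      rw [hfP a ⟨hasup, hau, hav⟩, hfP b ⟨hbsup, hbu, hbv⟩, hia, hib]
      exact (hstep b0 i).symm

lemma extend_coloring {V : Type} [Fintype V] [DecidableEq V] (H : SimpleGraph V)
    [DecidableRel H.Adj] {u v : V}
    (P1 P2 : H.Walk u v) (h1 : P1.IsPath) (h2 : P2.IsPath)
    (hpar : P1.length % 2 = P2.length % 2)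
    (hint : ∀ x, x ∈ P1.support → x ∈ P2.support → x = u ∨ x = v)
    (hdeg : ∀ x, (x ∈ P1.support ∨ x ∈ P2.support) → x ≠ u → x ≠ v → H.degree x = 2)
    (S : Set V) (c : V → ZMod 2)
    (hc : ∀ a b, a ∉ S → b ∉ S → H.Adj a b → c a ≠ c b)
    (b0 : ZMod 2) (hu : u ∉ S → c u = b0) (hv : v ∉ S → c v = b0 + P1.length) :
    IsOCT H (S \ (pInner P1 ∪ pInner P2)) := by
  classical
  rw [isOCT_iff]
  set S' := S \ (pInner P1 ∪ pInner P2) with hS'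
  set idx1 : V → ℕ := fun x =>
    if h : x ∈ P1.support then (Walk.mem_support_iff_exists_getVert.mp h).choose else 0 with hidx1def
  set idx2 : V → ℕ := fun x =>
    if h : x ∈ P2.support then (Walk.mem_support_iff_exists_getVert.mp h).choose else 0 with hidx2def
  have hidx1 : ∀ x ∈ P1.support, P1.getVert (idx1 x) = x ∧ idx1 x ≤ P1.length := by
    intro x hx
    simp only [hidx1def, dif_pos hx]
    exact (Walk.mem_support_iff_exists_getVert.mp hx).choose_spec
  have hidx2 : ∀ x ∈ P2.support, P2.getVert (idx2 x) = x ∧ idx2 x ≤ P2.length := by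
    intro x hx
    simp only [hidx2def, dif_pos hx]
    exact (Walk.mem_support_iff_exists_getVert.mp hx).choose_spec
  set f : V → ZMod 2 := fun x =>
    if x ∈ pInner P1 then b0 + idx1 x else if x ∈ pInner P2 then b0 + idx2 x else c x with hfdef
  have hdisj : ∀ y, y ∈ pInner P1 → y ∈ pInner P2 → False := by
    intro y hy1 hy2
    rcases hint y hy1.1 hy2.1 with h | h
    · exact hy1.2.1 h
    · exact hy1.2.2 h
  have hf1 : ∀ y ∈ pInner P1, f y = b0 + idx1 y := by
    intro y hy; simp only [hfdef]; rw [if_pos hy]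
  have hf2 : ∀ y ∈ pInner P2, f y = b0 + idx2 y := by
    intro y hy; simp only [hfdef]; rw [if_neg (fun h => hdisj y h hy), if_pos hy]
  have hf0 : ∀ y, y ∉ pInner P1 → y ∉ pInner P2 → f y = c y := by
    intro y hy1 hy2; simp only [hfdef]; rw [if_neg hy1, if_neg hy2]
  have hup : u ∉ pInner P1 ∪ pInner P2 := by
    rintro (⟨_, h, _⟩ | ⟨_, h, _⟩) <;> exact h rfl
  have hvp : v ∉ pInner P1 ∪ pInner P2 := by
    rintro (⟨_, _, h⟩ | ⟨_, _, h⟩) <;> exact h rfl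
  have hfu : u ∉ S' → f u = b0 := by
    intro h
    have huS : u ∉ S := fun hs => h ⟨hs, hup⟩
    rw [hf0 u (fun hh => hup (Or.inl hh)) (fun hh => hup (Or.inr hh))]
    exact hu huS
  have hfv : v ∉ S' → f v = b0 + P1.length := by
    intro h
    have hvS : v ∉ S := fun hs => h ⟨hs, hvp⟩
    rw [hf0 v (fun hh => hvp (Or.inl hh)) (fun hh => hvp (Or.inr hh))]
    exact hv hvS
  have hcast : (P1.length : ZMod 2) = (P2.length : ZMod 2) := by
    rw [← ZMod.natCast_mod P1.length 2, hpar, ZMod.natCast_mod]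
  have hfv2 : v ∉ S' → f v = b0 + P2.length := by
    intro h; rw [hfv h, hcast]
  have hdegP1 : ∀ x ∈ P1.support, x ≠ u → x ≠ v → H.degree x = 2 :=
    fun x hx => hdeg x (Or.inl hx)
  have hdegP2 : ∀ x ∈ P2.support, x ≠ u → x ≠ v → H.degree x = 2 :=
    fun x hx => hdeg x (Or.inr hx)
  refine ⟨f, ?_⟩
  intro a b ha hb hab
  by_cases ha1 : a ∈ pInner P1
  · exact key_step h1 hdegP1 hidx1 hf1 hfu hfv ha1 hb hab
  by_cases ha2 : a ∈ pInner P2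
  · exact key_step h2 hdegP2 hidx2 hf2 hfu hfv2 ha2 hb hab
  by_cases hb1 : b ∈ pInner P1
  · exact (key_step h1 hdegP1 hidx1 hf1 hfu hfv hb1 ha hab.symm).symm
  by_cases hb2 : b ∈ pInner P2
  · exact (key_step h2 hdegP2 hidx2 hf2 hfu hfv2 hb2 ha hab.symm).symm
  · rw [hf0 a ha1 ha2, hf0 b hb1 hb2]
    refine hc a b ?_ ?_ hab
    · exact fun h => ha ⟨h, fun hh => hh.elim ha1 ha2⟩
    · exact fun h => hb ⟨h, fun hh => hh.elim hb1 hb2⟩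

/-- If `P1` and `P2` are internally vertex-disjoint paths of the same parity between the
same endpoints `u, v`, all of whose internal vertices have degree 2 in `H`, then every
minimum-size odd cycle transversal of `H` meets `V(P1) ∪ V(P2)` only in `{u, v}`. -/
theorem min_oct_avoids_parallel_paths {V : Type} [Fintype V] [DecidableEq V]
    (H : SimpleGraph V) [DecidableRel H.Adj] {u v : V}
    (P1 P2 : H.Walk u v) (h1 : P1.IsPath) (h2 : P2.IsPath)
    (hpar : P1.length % 2 = P2.length % 2)
    (hint : ∀ x, x ∈ P1.support → x ∈ P2.support → x = u ∨ x = v)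
    (hdeg : ∀ x, (x ∈ P1.support ∨ x ∈ P2.support) → x ≠ u → x ≠ v → H.degree x = 2)
    (S : Set V) (hS : IsOCT H S)
    (hmin : ∀ S' : Set V, IsOCT H S' → S.ncard ≤ S'.ncard) :
    ∀ x ∈ S, (x ∈ P1.support ∨ x ∈ P2.support) → x = u ∨ x = v := by
  intro x hxS hxsup
  by_contra hcon
  push_neg at hcon
  obtain ⟨hxu, hxv⟩ := hcon
  have hxI : x ∈ pInner P1 ∪ pInner P2 := by
    rcases hxsup with h | h
    · exact Or.inl ⟨h, hxu, hxv⟩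
    · exact Or.inr ⟨h, hxu, hxv⟩
  set I := pInner P1 ∪ pInner P2 with hI
  obtain ⟨c, hc⟩ := (isOCT_iff H S).mp hS
  -- a small-size contradiction helper
  have hsmall : ¬ IsOCT H (S \ I) := by
    intro hoct
    have hle := hmin _ hoct
    have hsub : insert x (S \ I) ⊆ S := by
      intro y hy
      rcases Set.mem_insert_iff.mp hy with rfl | hy
      · exact hxS
      · exact hy.1
    have hxnot : x ∉ S \ I := fun h => h.2 hxI
    have : (S \ I).ncard + 1 ≤ S.ncard := by
      rw [← Set.ncard_insert_of_notMem hxnot (Set.toFinite _)]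
      exact Set.ncard_le_ncard hsub (Set.toFinite _)
    omega
  by_cases hvS : v ∈ S
  · exact hsmall (extend_coloring H P1 P2 h1 h2 hpar hint hdeg S c hc (c u)
      (fun _ => rfl) (fun h => absurd hvS h))
  by_cases huS : u ∈ S
  · refine hsmall (extend_coloring H P1 P2 h1 h2 hpar hint hdeg S c hc
      (c v - P1.length) (fun h => absurd huS h) (fun _ => by ring))
  by_cases hcc : c v = c u + P1.length
  · exact hsmall (extend_coloring H P1 P2 h1 h2 hpar hint hdeg S c hc (c u)
      (fun _ => rfl) (fun _ => hcc))
  · -- both inner sets meet S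
    have hcast : (P1.length : ZMod 2) = (P2.length : ZMod 2) := by
      rw [← ZMod.natCast_mod P1.length 2, hpar, ZMod.natCast_mod]
    have hm1 : ∃ y, y ∈ pInner P1 ∧ y ∈ S := by
      by_contra hno
      push_neg at hno
      refine hcc (alternation hc P1 ?_)
      intro y hy
      by_cases hyu : y = u
      · subst hyu; exact huS
      by_cases hyv : y = v
      · subst hyv; exact hvS
      · exact hno y ⟨hy, hyu, hyv⟩
    have hm2 : ∃ y, y ∈ pInner P2 ∧ y ∈ S := by
      by_contra hno
      push_neg at hno
      refine hcc ?_
      rw [hcast]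
      refine alternation hc P2 ?_
      intro y hy
      by_cases hyu : y = u
      · subst hyu; exact huS
      by_cases hyv : y = v
      · subst hyv; exact hvS
      · exact hno y ⟨hy, hyu, hyv⟩
    obtain ⟨y1, hy1I, hy1S⟩ := hm1
    obtain ⟨y2, hy2I, hy2S⟩ := hm2
    have hy12 : y1 ≠ y2 := by
      rintro rfl
      rcases hint y1 hy1I.1 hy2I.1 with h | h
      · exact hy1I.2.1 h
      · exact hy1I.2.2 h
    -- use T = S ∪ {u}
    set T := insert u S with hT
    have hcT : ∀ a b, a ∉ T → b ∉ T → H.Adj a b → c a ≠ c b := by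
      intro a b ha hb hab
      exact hc a b (fun h => ha (Set.mem_insert_of_mem _ h))
        (fun h => hb (Set.mem_insert_of_mem _ h)) hab
    have hoct : IsOCT H (T \ I) :=
      extend_coloring H P1 P2 h1 h2 hpar hint hdeg T c hcT
        (c v - P1.length) (fun h => absurd (Set.mem_insert u S) h) (fun _ => by ring)
    have hle := hmin _ hoct
    -- size estimates
    have hTsub : T \ I ⊆ insert u (S \ I) := by
      intro y hy
      rcases Set.mem_insert_iff.mp hy.1 with rfl | hyS
      · exact Set.mem_insert _ _
      · exact Set.mem_insert_of_mem _ ⟨hyS, hy.2⟩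
    have h1' : (T \ I).ncard ≤ (S \ I).ncard + 1 := by
      calc (T \ I).ncard ≤ (insert u (S \ I)).ncard :=
            Set.ncard_le_ncard hTsub (Set.toFinite _)
        _ ≤ (S \ I).ncard + 1 := Set.ncard_insert_le _ _
    have hy1not : y1 ∉ insert y2 (S \ I) := by
      intro h
      rcases Set.mem_insert_iff.mp h with rfl | h
      · exact hy12 rfl
      · exact h.2 (Or.inl hy1I)
    have hy2not : y2 ∉ S \ I := fun h => h.2 (Or.inr hy2I)
    have hsub2 : insert y1 (insert y2 (S \ I)) ⊆ S := by
      intro y hy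
      rcases Set.mem_insert_iff.mp hy with rfl | hy
      · exact hy1S
      rcases Set.mem_insert_iff.mp hy with rfl | hy
      · exact hy2S
      · exact hy.1
    have h2' : (S \ I).ncard + 2 ≤ S.ncard := by
      have := Set.ncard_le_ncard hsub2 (Set.toFinite _)
      rw [Set.ncard_insert_of_notMem hy1not (Set.toFinite _),
        Set.ncard_insert_of_notMem hy2not (Set.toFinite _)] at this
      omega
    omega
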